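/- A simple graph G has a 2-edge-colouring in which, for every vertex v, the set of neighbours of v joined to v by edges of the same colour induces a complete subgraph (a locally complete 2-edge-colouring), if and only if the auxiliary graph G⁺ is bipartite. -/
import Mathlib


open SimpleGraph

/-- A 2-edge-colouring `c` of `G` is locally complete if there is no monochromatic
induced path of length 2. -/
def IsLocallyComplete {V : Type*} (G : SimpleGraph V) (c : Sym2 V → Bool) : Prop :=
  ∀ u v w : V, G.Adj u v → G.Adj u w → v ≠ w → ¬ G.Adj v w → c s(u, v) ≠ c s(u, w)

/-- `G` has a locally complete 2-edge-colouring. -/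
def HasLC2EC {V : Type*} (G : SimpleGraph V) : Prop :=
  ∃ c : Sym2 V → Bool, IsLocallyComplete G c

/-- Two edges `e`, `f` of `G` form an induced path of length 2. -/
def AuxAdj {V : Type*} (G : SimpleGraph V) (e f : Sym2 V) : Prop :=
  ∃ u v w : V, G.Adj u v ∧ G.Adj u w ∧ v ≠ w ∧ ¬ G.Adj v w ∧ e = s(u, v) ∧ f = s(u, w)

/-- The auxiliary graph `G⁺`: vertices are the edges of `G`, adjacent iff they
form an induced path of length 2 in `G`. -/
def auxGraph {V : Type*} (G : SimpleGraph V) : SimpleGraph G.edgeSet :=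
  SimpleGraph.fromRel (fun e f => AuxAdj G (e : Sym2 V) (f : Sym2 V))

theorem stmt_0 {V : Type*} (G : SimpleGraph V) :
    HasLC2EC G ↔ (auxGraph G).Colorable 2 := by
  constructor
  · rintro ⟨c, hc⟩
    have C : (auxGraph G).Coloring Bool := by
      refine SimpleGraph.Coloring.mk (fun e => c (e : Sym2 V)) ?_
      rintro ⟨e, he⟩ ⟨f, hf⟩ hadj
      simp only [auxGraph, SimpleGraph.fromRel_adj] at hadj
      obtain ⟨hne, h | h⟩ := hadj
      · obtain ⟨u, v, w, h1, h2, h3, h4, he', hf'⟩ := h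
        simp only [he', hf']
        exact hc u v w h1 h2 h3 h4
      · obtain ⟨u, v, w, h1, h2, h3, h4, hf', he'⟩ := h
        simp only [he', hf']
        exact fun hh => hc u v w h1 h2 h3 h4 hh.symm
    have h2 := C.colorable
    simpa using h2
  · rintro ⟨C⟩
    classical
    refine ⟨fun e => if h : e ∈ G.edgeSet then finTwoEquiv (C ⟨e, h⟩) else false, ?_⟩
    intro u v w h1 h2 h3 h4
    have he : s(u,v) ∈ G.edgeSet := h1
    have hf : s(u,w) ∈ G.edgeSet := h2
    have hne : (⟨s(u,v), he⟩ : G.edgeSet) ≠ ⟨s(u,w), hf⟩ := by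
      intro heq
      rcases Sym2.eq_iff.mp (congrArg Subtype.val heq : s(u,v) = s(u,w)) with ⟨-, h5⟩ | ⟨h5, -⟩
      · exact h3 h5
      · exact G.irrefl (h5 ▸ h2)
    have hadj : (auxGraph G).Adj ⟨s(u,v), he⟩ ⟨s(u,w), hf⟩ := by
      show (SimpleGraph.fromRel _).Adj _ _
      rw [SimpleGraph.fromRel_adj]
      exact ⟨hne, Or.inl ⟨u, v, w, h1, h2, h3, h4, rfl, rfl⟩⟩
    have hv := C.valid hadj
    simp only [dif_pos he, dif_pos hf]
    exact fun hh => hv (finTwoEquiv.injective hh)
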